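/- Let Q∞, Q(k), Q^{ML} be symmetric positive definite matrices satisfying Q(k) ≥ Q∞ (monotone limit), Q(k) - Q∞ ≤ α ρ^{k-1} Q∞, and Q(d) - Q^{ML} ≤ ᾱ ρ̄^{d-1} Q^{ML} with Q(d) ≥ Q^{ML}. Then -(α ρ^{d-1}/(1 + α ρ^{d-1})) Q^{ML} ≤ Q∞ - Q^{ML} ≤ ᾱ ρ̄^{d-1} Q^{ML} (Corollary 2 structure). -/

import Mathlib

open Matrix

lemma psd_smul {n : ℕ} {M : Matrix (Fin n) (Fin n) ℝ} (hM : M.PosSemidef)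
    {c : ℝ} (hc : 0 ≤ c) : (c • M).PosSemidef := by
  refine ⟨by rw [Matrix.IsHermitian, conjTranspose_smul, star_trivial, hM.1.eq], fun x => ?_⟩
  have := hM.2 x
  exact (hM.smul hc).2 x

/-- Corollary 2 structure: from `Q(d) ≥ Q∞`, `Q(d) - Q∞ ≤ α ρ^(d-1) Q∞`,
`0 ≤ Q(d) - Q^ML ≤ ᾱ ρ̄^(d-1) Q^ML`, one gets
`-(α ρ^(d-1)/(1 + α ρ^(d-1))) Q^ML ≤ Q∞ - Q^ML ≤ ᾱ ρ̄^(d-1) Q^ML`. -/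
theorem stmt_4 {n : ℕ} (Qinf Qd QML : Matrix (Fin n) (Fin n) ℝ)
    (α αbar ρ ρbar : ℝ) (d : ℕ)
    (hQinf : Qinf.PosDef) (hQd : Qd.PosDef) (hQML : QML.PosDef)
    (hα : 0 < α) (hαbar : 0 < αbar) (hρ : 0 < ρ) (hρ1 : ρ < 1)
    (hρbar : 0 < ρbar) (hρbar1 : ρbar < 1) (hd : 1 ≤ d)
    (h1 : (Qd - Qinf).PosSemidef)
    (h2 : ((α * ρ ^ (d - 1)) • Qinf - (Qd - Qinf)).PosSemidef)
    (h3 : (Qd - QML).PosSemidef)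
    (h4 : ((αbar * ρbar ^ (d - 1)) • QML - (Qd - QML)).PosSemidef) :
    ((Qinf - QML) - (-(α * ρ ^ (d - 1) / (1 + α * ρ ^ (d - 1)))) • QML).PosSemidef ∧
      ((αbar * ρbar ^ (d - 1)) • QML - (Qinf - QML)).PosSemidef := by
  set c := α * ρ ^ (d - 1) with hc
  have hcpos : 0 < c := by positivity
  have h1c : 0 < 1 + c := by linarith
  constructor
  · have A := h2.add h3
    have B := psd_smul A (le_of_lt (by positivity : (0:ℝ) < 1 / (1 + c)))
    have e : (1 / (1 + c)) • ((c • Qinf - (Qd - Qinf)) + (Qd - QML)) =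
        (Qinf - QML) - (-(c / (1 + c))) • QML := by
      ext i j
      simp only [Matrix.smul_apply, Matrix.add_apply, Matrix.sub_apply, smul_eq_mul]
      field_simp
      ring
    rwa [e] at B
  · have A := h4.add h1
    have e : ((αbar * ρbar ^ (d - 1)) • QML - (Qd - QML)) + (Qd - Qinf) =
        (αbar * ρbar ^ (d - 1)) • QML - (Qinf - QML) := by
      ext i j
      simp only [Matrix.smul_apply, Matrix.add_apply, Matrix.sub_apply, smul_eq_mul]
      ring
    rwa [e] at A
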